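/- arXiv:0911.1671 — 3 statements merged into one kernel-verified Lean document; each statement's English description precedes it below -/
import Mathlib

section
/- Let Q be a monic polynomial with real simple zeros, and let z be a zero of Q. Suppose E⁰ is a critical point of Q with z < E⁰ and no zeros or critical points of Q in (z, E⁰), and E⁰ is a local maximum of Q with Q > 0 on (z, E⁰]. Then for all E in (z, E⁰], e·|Q(E)/(E - z)| ≥ |Q'(z)|. -/
open Polynomial

private lemma derivP_eval {ι : Type*} [DecidableEq ι] (s : Finset ι) (w : ι → ℝ) (t : ℝ) :
    (Polynomial.derivative (∏ j ∈ s, (X - C (w j)))).eval t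
      = ∑ j ∈ s, ∏ k ∈ s.erase j, (t - w k) := by
  classical
  induction s using Finset.induction_on with
  | empty => simp
  | @insert a s' ha ih =>
    rw [Finset.prod_insert ha, derivative_mul, derivative_X_sub_C, one_mul,
      eval_add, eval_mul, eval_sub, eval_X, eval_C, ih,
      Finset.sum_insert ha, Finset.erase_insert ha, eval_prod]
    simp only [eval_sub, eval_X, eval_C]
    rw [Finset.mul_sum]
    congr 1
    apply Finset.sum_congr rfl
    intro j hj
    rw [Finset.erase_insert_of_ne (fun h => ha (by rw [h]; exact hj)),
      Finset.prod_insert (fun h => ha (Finset.mem_of_mem_erase h))]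

/-- If `Q` is monic with real simple zeros, `z j0` is a zero, `E0 > z j0` is a
critical point of `Q` which is a local maximum, with no zeros or critical points of `Q` in
`(z j0, E0)` and `Q > 0` on `(z j0, E0]`, then for all `E ∈ (z j0, E0]`,
`e * |Q(E)/(E - z j0)| ≥ |Q'(z j0)|`. -/
theorem stmt1 (q : ℕ) (z : Fin q → ℝ) (hz : Function.Injective z)
    (Q : Polynomial ℝ) (hQ : Q = ∏ j : Fin q, (X - C (z j)))
    (j0 : Fin q) (E0 : ℝ)
    (hlt : z j0 < E0)
    (hcrit : Q.derivative.eval E0 = 0)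
    (hmax : IsLocalMax (fun x => Q.eval x) E0)
    (hno : ∀ x ∈ Set.Ioo (z j0) E0, Q.eval x ≠ 0 ∧ Q.derivative.eval x ≠ 0)
    (hpos : ∀ x ∈ Set.Ioc (z j0) E0, 0 < Q.eval x) :
    ∀ E ∈ Set.Ioc (z j0) E0,
      Real.exp 1 * |Q.eval E / (E - z j0)| ≥ |Q.derivative.eval (z j0)| := by
  intro E hE
  set c : ℝ := z j0 with hcdef
  set s : Finset (Fin q) := Finset.univ.erase j0 with hsdef
  set P : Polynomial ℝ := ∏ j ∈ s, (X - C (z j)) with hPdef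
  have hd : (0:ℝ) < E0 - c := by linarith
  have hQP : Q = (X - C c) * P := by
    rw [hQ, hPdef, ← Finset.mul_prod_erase _ _ (Finset.mem_univ j0)]
  have hevalP : ∀ u : ℝ, P.eval u = ∏ j ∈ s, (u - z j) := by
    intro u; simp [hPdef, eval_prod]
  -- the other roots lie outside [c, E0]
  have hout : ∀ j ∈ s, z j ∉ Set.Icc c E0 := by
    intro j hj hmem
    have hjne : j ≠ j0 := Finset.ne_of_mem_erase hj
    have hne : z j ≠ c := fun h => hjne (hz h)
    have h1 : c < z j := lt_of_le_of_ne hmem.1 (Ne.symm hne)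
    rcases eq_or_lt_of_le hmem.2 with h2 | h2
    · have hQ0 : Q.eval E0 = 0 := by
        rw [hQ, eval_prod]
        apply Finset.prod_eq_zero (Finset.mem_univ j)
        simp [h2]
      linarith [hpos E0 ⟨hlt, le_refl E0⟩]
    · have hQ0 : Q.eval (z j) = 0 := by
        rw [hQ, eval_prod]
        apply Finset.prod_eq_zero (Finset.mem_univ j)
        simp
      exact (hno (z j) ⟨h1, h2⟩).1 hQ0
  -- positivity of P on [c, E0]
  have hPE0 : 0 < P.eval E0 := by
    have h := hpos E0 ⟨hlt, le_refl _⟩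
    rw [hQP] at h; simp only [eval_mul, eval_sub, eval_X, eval_C] at h
    nlinarith
  have hPne : ∀ t ∈ Set.Icc c E0, P.eval t ≠ 0 := by
    intro t ht h0
    rw [hevalP] at h0
    rcases Finset.prod_eq_zero_iff.mp h0 with ⟨j, hj, hj0⟩
    exact hout j hj ⟨by linarith [sub_eq_zero.mp hj0, ht.1],
      by linarith [sub_eq_zero.mp hj0, ht.2]⟩
  have hPpos : ∀ t ∈ Set.Icc c E0, 0 < P.eval t := by
    intro t ht
    rcases lt_trichotomy (P.eval t) 0 with h | h | h
    · exfalso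
      have hcont : ContinuousOn (fun x => P.eval x) (Set.Icc t E0) :=
        (Polynomial.continuous P).continuousOn
      have hsub : Set.Icc (P.eval t) (P.eval E0) ⊆ (fun x => P.eval x) '' Set.Icc t E0 :=
        intermediate_value_Icc ht.2 hcont
      rcases hsub ⟨le_of_lt h, le_of_lt hPE0⟩ with ⟨u, hu, hu0⟩
      exact hPne u ⟨le_trans ht.1 hu.1, hu.2⟩ hu0
    · exact absurd h (hPne t ht)
    · exact h
  -- derivative of P as a sum
  have hderivP : ∀ t : ℝ, P.derivative.eval t = ∑ j ∈ s, ∏ k ∈ s.erase j, (t - z k) := by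
    intro t
    rw [hPdef]
    exact derivP_eval s z t
  -- Q' = P + (X - C c) * P'
  have hderivQ : Q.derivative = P + (X - C c) * P.derivative := by
    rw [hQP, derivative_mul]; simp
  -- critical point relation : P(E0) + (E0 - c) * P'(E0) = 0
  have hcritP : P.eval E0 + (E0 - c) * P.derivative.eval E0 = 0 := by
    have := hcrit
    rw [hderivQ] at this
    simpa using this
  -- key comparison : P'(E0) * P(t) ≤ P'(t) * P(E0) on [c, E0]
  have hkey : ∀ t ∈ Set.Icc c E0,
      P.derivative.eval E0 * P.eval t ≤ P.derivative.eval t * P.eval E0 := by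
    intro t ht
    rw [hderivP, hderivP, Finset.sum_mul, Finset.sum_mul]
    apply Finset.sum_le_sum
    intro j hj
    have hPt : P.eval t = (t - z j) * ∏ k ∈ s.erase j, (t - z k) := by
      rw [hevalP, ← Finset.mul_prod_erase _ _ hj]
    have hPE : P.eval E0 = (E0 - z j) * ∏ k ∈ s.erase j, (E0 - z k) := by
      rw [hevalP, ← Finset.mul_prod_erase _ _ hj]
    rw [hPt, hPE]
    have hA : 0 ≤ ∏ k ∈ s.erase j, ((t - z k) * (E0 - z k)) := by
      apply Finset.prod_nonneg
      intro k hk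
      have hks : k ∈ s := Finset.mem_of_mem_erase hk
      have hko := hout k hks
      rcases lt_or_ge (z k) c with h | h
      · have h1 : 0 < t - z k := by linarith [ht.1]
        have h2 : 0 < E0 - z k := by linarith
        positivity
      · have h2 : E0 < z k := by
          by_contra hcon; push_neg at hcon; exact hko ⟨h, hcon⟩
        have h1 : t - z k < 0 := by linarith [ht.2]
        have h3 : E0 - z k < 0 := by linarith
        nlinarith
    rw [Finset.prod_mul_distrib] at hA
    nlinarith [mul_nonneg hA (by linarith [ht.2] : (0:ℝ) ≤ (E0 - z j) - (t - z j))]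
  -- hence P'(t) * (E0 - c) + P(t) ≥ 0 on [c, E0]
  have hkey2 : ∀ t ∈ Set.Icc c E0, 0 ≤ P.derivative.eval t * (E0 - c) + P.eval t := by
    intro t ht
    have h1 := hkey t ht
    have h2 := hPpos t ht
    nlinarith [mul_le_mul_of_nonneg_right h1 hd.le]
  -- the function g(t) = P(t) * exp(t/(E0-c)) is monotone on [c, E0]
  set g : ℝ → ℝ := fun x => P.eval x * Real.exp (x / (E0 - c)) with hgdef
  have hg : ∀ t : ℝ, HasDerivAt g
      ((P.derivative.eval t + P.eval t / (E0 - c)) * Real.exp (t / (E0 - c))) t := by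
    intro t
    have h1 : HasDerivAt (fun x : ℝ => P.eval x) (P.derivative.eval t) t :=
      Polynomial.hasDerivAt P t
    have h2 : HasDerivAt (fun x : ℝ => Real.exp (x / (E0 - c)))
        (Real.exp (t / (E0 - c)) * (1 / (E0 - c))) t :=
      ((hasDerivAt_id t).div_const (E0 - c)).exp
    have : HasDerivAt g _ t := h1.mul h2
    convert this using 1
    ring
  have hmono : MonotoneOn g (Set.Icc c E0) := by
    apply monotoneOn_of_deriv_nonneg (convex_Icc c E0)
    · exact (Continuous.mul (Polynomial.continuous P)
        (Real.continuous_exp.comp (continuous_id.div_const _))).continuousOn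
    · intro t ht
      exact (hg t).differentiableAt.differentiableWithinAt
    · intro t ht
      rw [interior_Icc] at ht
      rw [(hg t).deriv]
      apply mul_nonneg _ (Real.exp_pos _).le
      have h := hkey2 t ⟨ht.1.le, ht.2.le⟩
      have := div_nonneg h hd.le
      rwa [add_div, mul_div_cancel_right₀ _ hd.ne'] at this
  have hgc : g c ≤ g E := hmono ⟨le_refl c, hlt.le⟩ ⟨hE.1.le, hE.2⟩ hE.1.le
  -- unfold and finish
  have hPc : 0 < P.eval c := hPpos c ⟨le_refl _, by linarith⟩
  have hPE : 0 < P.eval E := hPpos E ⟨hE.1.le, hE.2⟩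
  have hexp : Real.exp (E / (E0 - c)) ≤ Real.exp (c / (E0 - c)) * Real.exp 1 := by
    rw [← Real.exp_add]
    apply Real.exp_le_exp.mpr
    rw [div_le_iff₀ hd, add_mul, div_mul_cancel₀ _ hd.ne', one_mul]
    linarith [hE.2]
  have hfin : P.eval c ≤ Real.exp 1 * P.eval E := by
    have h1 : g E ≤ P.eval E * (Real.exp (c / (E0 - c)) * Real.exp 1) := by
      exact mul_le_mul_of_nonneg_left hexp hPE.le
    have h2 := hgc.trans h1
    have h3 : (0:ℝ) < Real.exp (c / (E0 - c)) := Real.exp_pos _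
    simp only [hgdef] at h2
    nlinarith
  have hQ'c : Q.derivative.eval c = P.eval c := by
    rw [hderivQ]; simp
  have hQE : Q.eval E = (E - c) * P.eval E := by
    rw [hQP]; simp
  have hEc : E - c ≠ 0 := sub_ne_zero.mpr (ne_of_gt hE.1)
  rw [hQ'c, hQE, mul_div_cancel_left₀ _ hEc, abs_of_pos hPc, abs_of_pos hPE]
  exact hfin
end

section
/- Suppose t > 0 and b_ℓ, b_r > 0 satisfy both b_ℓ > t·b_r/(b_ℓ + b_r) and b_r > t·b_ℓ/(b_ℓ + b_r), and at least one of b_ℓ ≥ t or b_r ≥ t holds. Then b_ℓ + b_r ≥ ((√5 + 1)/2)·t. -/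
/-- If `t > 0`, `bl, br > 0` satisfy both `bl > t·br/(bl+br)` and
`br > t·bl/(bl+br)`, and at least one of `bl ≥ t`, `br ≥ t` holds, then
`bl + br ≥ ((√5 + 1)/2)·t`. -/
theorem stmt4 (t bl br : ℝ) (ht : 0 < t) (hbl : 0 < bl) (hbr : 0 < br)
    (h1 : bl > t * br / (bl + br)) (h2 : br > t * bl / (bl + br))
    (h3 : bl ≥ t ∨ br ≥ t) :
    bl + br ≥ ((Real.sqrt 5 + 1) / 2) * t := by
  have hsum : 0 < bl + br := by linarith
  have h1' : bl * (bl + br) > t * br := by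
    have := (div_lt_iff₀ hsum).mp h1
    linarith
  have h2' : br * (bl + br) > t * bl := by
    have := (div_lt_iff₀ hsum).mp h2
    linarith
  have hs : Real.sqrt 5 ^ 2 = 5 := Real.sq_sqrt (by norm_num)
  have hs2 : Real.sqrt 5 ≥ 2 := by
    nlinarith [Real.sqrt_nonneg 5]
  by_contra hc
  push_neg at hc
  rcases h3 with h | h
  · nlinarith [mul_pos ht hbl, mul_pos ht ht]
  · nlinarith [mul_pos ht hbr, mul_pos ht ht]
end

section
/- Let Q be a monic polynomial with real simple zeros, let Ê be a real number with |Q(Ê)| = 2, and let δ > 0. Suppose all zeros of Q lying outside an interval I ∋ Ê are at distance greater than d > 4δ to the right of Ê, that I has length at most δ, that I contains N ≥ 1 zeros of Q including z(Ê), and |Ê - z(Ê)| = b > 0. Then |Q(Ê + 4δ)| ≥ (2·(3δ)/b)·3^(N-1)·(1 - 4δ/d)^(q - N), where q = deg Q. -/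
open Polynomial

/-- `Q` monic of degree `q` with real simple zeros, `|Q(Ê)| = 2`, `δ > 0`,
`d > 4δ`; the interval `I = [a,b]` has length at most `δ`, contains `Ê` and `N ≥ 1` zeros of
`Q`, including `z j0` with `|Ê - z j0| = bb > 0`; all zeros outside `I` lie at distance
greater than `d` to the right of `Ê`. Then
`|Q(Ê + 4δ)| ≥ 2·(3δ)/bb · 3^(N-1) · (1 - 4δ/d)^(q - N)`. -/
theorem stmt7 (q : ℕ) (z : Fin q → ℝ) (hz : Function.Injective z)
    (Q : Polynomial ℝ) (hQ : Q = ∏ j : Fin q, (X - C (z j)))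
    (Ehat : ℝ) (hE2 : |Q.eval Ehat| = 2)
    (δ d : ℝ) (hδ : 0 < δ) (hd : 4 * δ < d)
    (a b : ℝ) (hlen : b - a ≤ δ) (hEI : Ehat ∈ Set.Icc a b)
    (j0 : Fin q) (hj0 : z j0 ∈ Set.Icc a b)
    (bb : ℝ) (hbb : |Ehat - z j0| = bb) (hbbpos : 0 < bb)
    (hout : ∀ j : Fin q, z j ∉ Set.Icc a b → Ehat + d < z j)
    (N : ℕ) (hN : N = (Finset.univ.filter (fun j => z j ∈ Set.Icc a b)).card)
    (hN1 : 1 ≤ N) :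
    |Q.eval (Ehat + 4 * δ)| ≥
      2 * (3 * δ) / bb * 3 ^ (N - 1) * (1 - 4 * δ / d) ^ (q - N) := by
  set S := Finset.univ.filter (fun j => z j ∈ Set.Icc a b) with hS
  have hd0 : 0 < d := by linarith
  have hratio : 0 ≤ 1 - 4 * δ / d := by
    rw [sub_nonneg, div_le_one hd0]; linarith
  have hj0S : j0 ∈ S := by
    rw [hS, Finset.mem_filter]; exact ⟨Finset.mem_univ _, hj0⟩
  set c : Fin q → ℝ := fun j => if j ∈ S then (if j = j0 then 3 * δ / bb else 3)
      else 1 - 4 * δ / d with hc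
  have hcnonneg : ∀ j, 0 ≤ c j := by
    intro j
    simp only [hc]
    split_ifs
    · positivity
    · norm_num
    · exact hratio
  have key : ∀ j, c j * |Ehat - z j| ≤ |Ehat + 4 * δ - z j| := by
    intro j
    by_cases hjS : j ∈ S
    · have hzj : z j ∈ Set.Icc a b := by
        rw [hS, Finset.mem_filter] at hjS; exact hjS.2
      have h1 : |Ehat - z j| ≤ δ := by
        rcases hEI with ⟨hEa, hEb⟩; rcases hzj with ⟨ha1, hb1⟩
        rw [abs_le]; constructor <;> linarith
      have h1' := abs_le.mp h1
      have h2 : 3 * δ ≤ |Ehat + 4 * δ - z j| := by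
        rw [abs_of_nonneg (by linarith [h1'.1])]; linarith [h1'.1]
      by_cases hj0' : j = j0
      · subst hj0'
        have hcj : c j = 3 * δ / bb := by simp [hc, hjS]
        rw [hcj, hbb, div_mul_cancel₀ _ (ne_of_gt hbbpos)]
        exact h2
      · simp only [hc, if_pos hjS, if_neg hj0']
        nlinarith [abs_nonneg (Ehat - z j)]
    · have hzj : z j ∉ Set.Icc a b := by
        intro h; exact hjS (by rw [hS, Finset.mem_filter]; exact ⟨Finset.mem_univ _, h⟩)
      have ht : Ehat + d < z j := hout j hzj
      have habs1 : |Ehat - z j| = z j - Ehat := by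
        rw [abs_sub_comm, abs_of_pos (by linarith)]
      have habs2 : |Ehat + 4 * δ - z j| = z j - Ehat - 4 * δ := by
        rw [abs_sub_comm, abs_of_pos (by linarith)]; ring
      simp only [hc, if_neg hjS]
      rw [habs1, habs2]
      have h4 : 4 * δ / d * d ≤ 4 * δ / d * (z j - Ehat) := by
        apply mul_le_mul_of_nonneg_left (by linarith) (by positivity)
      have h5 : 4 * δ / d * d = 4 * δ := div_mul_cancel₀ _ (ne_of_gt hd0)
      nlinarith
  have habs : ∀ x : ℝ, |Q.eval x| = ∏ j, |x - z j| := by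
    intro x
    rw [hQ, eval_prod, Finset.abs_prod]
    simp
  have hg2 : ∏ j, |Ehat - z j| = 2 := by rw [← habs, hE2]
  have hSc : Sᶜ.card = q - N := by
    rw [Finset.card_compl, hN, Fintype.card_fin]
  have hprodc : ∏ j, c j = 3 * δ / bb * 3 ^ (N - 1) * (1 - 4 * δ / d) ^ (q - N) := by
    rw [← Finset.prod_mul_prod_compl S c]
    have h1 : ∏ j ∈ Sᶜ, c j = (1 - 4 * δ / d) ^ (q - N) := by
      rw [Finset.prod_congr rfl (fun j hj => by
        simp only [hc]; rw [if_neg (Finset.mem_compl.mp hj)]),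
        Finset.prod_const, hSc]
    have h2 : ∏ j ∈ S, c j = 3 * δ / bb * 3 ^ (N - 1) := by
      rw [← Finset.mul_prod_erase S c hj0S]
      have hcj0 : c j0 = 3 * δ / bb := by simp [hc, hj0S]
      have hrest : ∀ j ∈ S.erase j0, c j = 3 := by
        intro j hj
        obtain ⟨hne, hjS⟩ := Finset.mem_erase.mp hj
        simp [hc, hjS, hne]
      rw [hcj0, Finset.prod_congr rfl hrest, Finset.prod_const,
        Finset.card_erase_of_mem hj0S, ← hN]
    rw [h1, h2]
  rw [ge_iff_le, habs (Ehat + 4 * δ)]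
  have hfinal : 2 * (3 * δ) / bb * 3 ^ (N - 1) * (1 - 4 * δ / d) ^ (q - N)
      = ∏ j, (c j * |Ehat - z j|) := by
    rw [Finset.prod_mul_distrib, hprodc, hg2]; ring
  rw [hfinal]
  exact Finset.prod_le_prod (fun j _ => mul_nonneg (hcnonneg j) (abs_nonneg _))
    (fun j _ => key j)
end
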